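/- For a square matrix Y, the Lyapunov operator L_Y(X) = XY + Y*X on n×n matrices is bijective if and only if Y is Lyapunov regular, i.e., λ_i + conj(λ_j) ≠ 0 for all eigenvalues λ_i, λ_j of Y. -/

import Mathlib

open Matrix Polynomial

variable {n : ℕ}

-- eval of charpoly
lemma eval_charpoly' (M : Matrix (Fin n) (Fin n) ℂ) (r : ℂ) :
    (M.charpoly).eval r = (r • (1 : Matrix (Fin n) (Fin n) ℂ) - M).det := by
  rw [Matrix.charpoly, ← Polynomial.coe_evalRingHom, RingHom.map_det]
  congr 1
  ext i j
  by_cases h : i = j <;>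
    simp [charmatrix_apply, Matrix.map_apply, h, Matrix.one_apply, Matrix.smul_apply,
      Matrix.diagonal_apply]

lemma mem_spectrum_iff_det (M : Matrix (Fin n) (Fin n) ℂ) (r : ℂ) :
    r ∈ spectrum ℂ M ↔ (r • (1 : Matrix (Fin n) (Fin n) ℂ) - M).det = 0 := by
  rw [spectrum.mem_iff, Matrix.isUnit_iff_isUnit_det, isUnit_iff_ne_zero, not_not,
    Algebra.algebraMap_eq_smul_one]

lemma conj_mem_spectrum_conjTranspose {M : Matrix (Fin n) (Fin n) ℂ} {r : ℂ}
    (h : r ∈ spectrum ℂ M) : (starRingEnd ℂ) r ∈ spectrum ℂ Mᴴ := by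
  rw [mem_spectrum_iff_det] at h ⊢
  have : (starRingEnd ℂ) r • (1 : Matrix (Fin n) (Fin n) ℂ) - Mᴴ
      = (r • (1 : Matrix (Fin n) (Fin n) ℂ) - M)ᴴ := by
    rw [conjTranspose_sub, conjTranspose_smul, conjTranspose_one]; rfl
  rw [this, det_conjTranspose, h, star_zero]

lemma aeval_mul_of_semiconj {A B X : Matrix (Fin n) (Fin n) ℂ} (h : A * X = X * B)
    (p : ℂ[X]) : (aeval A p) * X = X * (aeval B p) := by
  induction p using Polynomial.induction_on' with
  | add p q hp hq => simp [add_mul, mul_add, hp, hq]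
  | monomial k c =>
      simp only [aeval_monomial]
      have hk : A ^ k * X = X * B ^ k := by
        induction k with
        | zero => simp
        | succ m ih => rw [pow_succ, pow_succ, mul_assoc, h, ← mul_assoc, ih, mul_assoc]
      rw [mul_assoc, hk, ← mul_assoc, Algebra.commutes, mul_assoc]

lemma isUnit_aeval_prod (A : Matrix (Fin n) (Fin n) ℂ) (s : Multiset ℂ)
    (h : ∀ r ∈ s, IsUnit (r • (1 : Matrix (Fin n) (Fin n) ℂ) - A)) :
    IsUnit (aeval A (s.map fun r => (X : ℂ[X]) - C r).prod) := by
  induction s using Multiset.induction with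
  | empty => simp
  | cons a t ih =>
      rw [Multiset.map_cons, Multiset.prod_cons, _root_.map_mul]
      refine IsUnit.mul ?_ (ih fun r hr => h r (Multiset.mem_cons_of_mem hr))
      have : aeval A ((X : ℂ[X]) - C a) = A - a • 1 := by
        simp [Algebra.algebraMap_eq_smul_one]
      rw [this, ← neg_sub, IsUnit.neg_iff]
      exact h a (Multiset.mem_cons_self a t)

lemma lyap_injective (Y : Matrix (Fin n) (Fin n) ℂ)
    (hreg : ∀ μ ∈ spectrum ℂ Y, ∀ ν ∈ spectrum ℂ Y, μ + starRingEnd ℂ ν ≠ 0)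
    {X : Matrix (Fin n) (Fin n) ℂ} (hX : X * Y + Yᴴ * X = 0) : X = 0 := by
  have hsemi : Yᴴ * X = X * (-Y) := by
    rw [mul_neg]
    exact eq_neg_of_add_eq_zero_right hX
  set p := (-Y).charpoly with hp
  have hmon : p.Monic := Matrix.charpoly_monic _
  have hsplit : p = (p.roots.map fun a => Polynomial.X - C a).prod :=
    (IsAlgClosed.splits p).eq_prod_roots_of_monic hmon
  have hzero : (Polynomial.aeval Yᴴ p) * X = 0 := by
    rw [aeval_mul_of_semiconj hsemi, Matrix.aeval_self_charpoly, mul_zero]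
  have hunit : IsUnit (Polynomial.aeval Yᴴ p) := by
    rw [hsplit]
    apply isUnit_aeval_prod
    intro r hr
    by_contra hcon
    have hr' : r ∈ spectrum ℂ Yᴴ := by
      rw [spectrum.mem_iff, Algebra.algebraMap_eq_smul_one]; exact hcon
    have h1 : starRingEnd ℂ r ∈ spectrum ℂ Y := by
      have := conj_mem_spectrum_conjTranspose hr'
      rwa [conjTranspose_conjTranspose] at this
    have h2 : -r ∈ spectrum ℂ Y := by
      have hroot : p.IsRoot r := (Polynomial.mem_roots hmon.ne_zero).mp hr
      rw [Polynomial.IsRoot, eval_charpoly', sub_neg_eq_add] at hroot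
      rw [mem_spectrum_iff_det]
      have he : (-r) • (1 : Matrix (Fin n) (Fin n) ℂ) - Y = -(r • 1 + Y) := by
        rw [neg_add, neg_smul, sub_eq_add_neg]
      rw [he, Matrix.det_neg, hroot, mul_zero]
    exact hreg (-r) h2 (starRingEnd ℂ r) h1 (by simp)
  obtain ⟨u, hu⟩ := hunit
  calc X = (↑u⁻¹ * ↑u) * X := by rw [Units.inv_mul, one_mul]
  _ = ↑u⁻¹ * ((Polynomial.aeval Yᴴ p) * X) := by rw [mul_assoc, hu]
  _ = 0 := by rw [hzero, mul_zero]

lemma exists_eigenvector {M : Matrix (Fin n) (Fin n) ℂ} {c : ℂ} (h : c ∈ spectrum ℂ M) :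
    ∃ v : Fin n → ℂ, v ≠ 0 ∧ M *ᵥ v = c • v := by
  rw [mem_spectrum_iff_det] at h
  obtain ⟨v, hv0, hv⟩ := (Matrix.exists_mulVec_eq_zero_iff).mpr h
  refine ⟨v, hv0, ?_⟩
  rw [sub_mulVec, smul_mulVec, one_mulVec, sub_eq_zero] at hv
  exact hv.symm

/-- The Lyapunov operator `X ↦ X*Y + Yᴴ*X` is bijective iff `Y` is Lyapunov
regular, i.e. `μ + conj ν ≠ 0` for all eigenvalues `μ, ν` of `Y`. -/
theorem stmt1 {n : ℕ} (Y : Matrix (Fin n) (Fin n) ℂ) :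
    Function.Bijective (fun X : Matrix (Fin n) (Fin n) ℂ => X * Y + Yᴴ * X) ↔
      ∀ μ ∈ spectrum ℂ Y, ∀ ν ∈ spectrum ℂ Y, μ + starRingEnd ℂ ν ≠ 0 := by
  constructor
  · intro hbij μ hμ ν hν hsum
    obtain ⟨u, hu0, hu⟩ := exists_eigenvector (conj_mem_spectrum_conjTranspose hν)
    obtain ⟨w, hw0, hw⟩ := exists_eigenvector (conj_mem_spectrum_conjTranspose hμ)
    set X : Matrix (Fin n) (Fin n) ℂ :=
      Matrix.of fun i j => u i * starRingEnd ℂ (w j) with hXdef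
    have h1 : ∀ j, ∑ k, Y k j * starRingEnd ℂ (w k) = μ * starRingEnd ℂ (w j) := by
      intro j
      have h := congrFun hw j
      simp only [Matrix.mulVec, dotProduct, conjTranspose_apply, Pi.smul_apply,
        smul_eq_mul] at h
      have h' := congrArg (starRingEnd ℂ) h
      simp only [map_sum, _root_.map_mul, RingHomCompTriple.comp_apply, RingHom.id_apply,
        Complex.conj_conj] at h'
      simpa [mul_comm] using h'
    have h2 : ∀ i, ∑ k, Yᴴ i k * u k = starRingEnd ℂ ν * u i := by
      intro i
      have h := congrFun hu i
      simpa [Matrix.mulVec, dotProduct] using h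
    have hL : X * Y + Yᴴ * X = 0 := by
      ext i j
      simp only [Matrix.add_apply, Matrix.mul_apply, Matrix.zero_apply, hXdef, Matrix.of_apply]
      have e1 : ∑ k, u i * starRingEnd ℂ (w k) * Y k j
          = u i * (μ * starRingEnd ℂ (w j)) := by
        rw [← h1 j, Finset.mul_sum]
        exact Finset.sum_congr rfl fun k _ => by ring
      have e2 : ∑ k, Yᴴ i k * (u k * starRingEnd ℂ (w j))
          = (starRingEnd ℂ ν * u i) * starRingEnd ℂ (w j) := by
        rw [← h2 i, Finset.sum_mul]
        exact Finset.sum_congr rfl fun k _ => by ring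
      rw [e1, e2]
      have : (μ + starRingEnd ℂ ν) * (u i * starRingEnd ℂ (w j)) = 0 := by
        rw [hsum, zero_mul]
      linear_combination this
    have hX0 : X ≠ 0 := by
      obtain ⟨i, hi⟩ := Function.ne_iff.mp hu0
      obtain ⟨j, hj⟩ := Function.ne_iff.mp hw0
      intro hc
      have := congrFun (congrFun hc i) j
      simp only [hXdef, Matrix.of_apply, Matrix.zero_apply, mul_eq_zero] at this
      rcases this with h | h
      · exact hi h
      · exact hj (by simpa using h)
    have : X = 0 := hbij.injective (by simp [hL])
    exact hX0 this
  · intro hreg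
    let L : Matrix (Fin n) (Fin n) ℂ →ₗ[ℂ] Matrix (Fin n) (Fin n) ℂ :=
      { toFun := fun X => X * Y + Yᴴ * X
        map_add' := fun A B => by noncomm_ring
        map_smul' := fun c A => by simp [Matrix.smul_mul, Matrix.mul_smul, smul_add] }
    have hinj : Function.Injective L := by
      rw [← LinearMap.ker_eq_bot, LinearMap.ker_eq_bot']
      exact fun X hX => lyap_injective Y hreg hX
    exact ⟨hinj, LinearMap.injective_iff_surjective.mp hinj⟩
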